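/- Let V be a type and d : V → V → ℝ satisfy d(u,v) ≥ 0, d(u,v) = d(v,u), and d(u,w) ≤ d(u,v) + d(v,w) for all u, v, w. Let l : Fin K → V with K ≥ 1 be landmarks, let A : Fin m → Fin K → ℝ be row-stochastic with m ≥ 1, define compressed labels y i (v) = Σ_k A i k · d(l k, v), the compressed heuristic h_A(u,t) = max over i of |y i (u) − y i (t)|, and for T > 0 the smooth compressed heuristic h̃_A(u,t) = (1/T)·log(Σ_i exp(T · |y i (u) − y i (t)|)) − (log m)/T. Then for all u, t ∈ V: h̃_A(u,t) ≤ h_A(u,t) ≤ (max over k of |d(l k, u) − d(l k, t)|) ≤ d(u,t). -/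

import Mathlib

/-- Maximum of a real-valued function over `Fin K`, given `1 ≤ K`. -/
noncomputable def fmax {K : ℕ} (hK : 1 ≤ K) (f : Fin K → ℝ) : ℝ :=
  Finset.univ.sup' (Finset.univ_nonempty_iff.mpr ⟨⟨0, hK⟩⟩) f

/-- End-to-end admissibility chain: the smooth compressed heuristic is
bounded by the hard compressed heuristic, which is bounded by the teacher
ALT heuristic, which is bounded by the distance. -/
theorem smooth_compressed_admissibility_chain {V : Type*} (d : V → V → ℝ)
    (hnn : ∀ u v, 0 ≤ d u v)
    (hsymm : ∀ u v, d u v = d v u)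
    (htri : ∀ u v w, d u w ≤ d u v + d v w)
    {K m : ℕ} (hK : 1 ≤ K) (hm : 1 ≤ m) (l : Fin K → V)
    (A : Fin m → Fin K → ℝ)
    (hA0 : ∀ i k, 0 ≤ A i k) (hA1 : ∀ i, ∑ k, A i k = 1)
    (T : ℝ) (hT : 0 < T) (u t : V) :
    ((1 / T) * Real.log (∑ i,
        Real.exp (T * |(∑ k, A i k * d (l k) u) - (∑ k, A i k * d (l k) t)|))
        - Real.log m / T
      ≤ fmax hm (fun i => |(∑ k, A i k * d (l k) u) - (∑ k, A i k * d (l k) t)|)) ∧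
    (fmax hm (fun i => |(∑ k, A i k * d (l k) u) - (∑ k, A i k * d (l k) t)|)
      ≤ fmax hK (fun k => |d (l k) u - d (l k) t|)) ∧
    (fmax hK (fun k => |d (l k) u - d (l k) t|) ≤ d u t) := by
  set g : Fin m → ℝ := fun i => |(∑ k, A i k * d (l k) u) - (∑ k, A i k * d (l k) t)|
  have hmne : (Finset.univ : Finset (Fin m)).Nonempty :=
    Finset.univ_nonempty_iff.mpr ⟨⟨0, hm⟩⟩
  have hKne : (Finset.univ : Finset (Fin K)).Nonempty :=
    Finset.univ_nonempty_iff.mpr ⟨⟨0, hK⟩⟩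
  refine ⟨?_, ?_, ?_⟩
  · -- LSE bound
    have hsum : (∑ i, Real.exp (T * g i)) ≤ m * Real.exp (T * fmax hm g) := by
      calc (∑ i : Fin m, Real.exp (T * g i))
          ≤ ∑ _i : Fin m, Real.exp (T * fmax hm g) := by
            apply Finset.sum_le_sum
            intro i _
            exact Real.exp_le_exp.mpr (by
              have := Finset.le_sup' g (Finset.mem_univ i)
              exact mul_le_mul_of_nonneg_left this hT.le)
        _ = m * Real.exp (T * fmax hm g) := by simp [Finset.sum_const, nsmul_eq_mul]
    have hpos : (0:ℝ) < ∑ i, Real.exp (T * g i) :=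
      Finset.sum_pos (fun i _ => Real.exp_pos _) hmne
    have hlog : Real.log (∑ i, Real.exp (T * g i)) ≤ Real.log m + T * fmax hm g := by
      calc Real.log (∑ i, Real.exp (T * g i))
          ≤ Real.log (m * Real.exp (T * fmax hm g)) := Real.log_le_log hpos hsum
        _ = Real.log m + T * fmax hm g := by
            rw [Real.log_mul (by positivity) (Real.exp_ne_zero _), Real.log_exp]
    have h1 : (1 / T) * Real.log (∑ i, Real.exp (T * g i))
        ≤ (1 / T) * (Real.log m + T * fmax hm g) :=
      mul_le_mul_of_nonneg_left hlog (by positivity)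
    have : (1 / T) * (Real.log m + T * fmax hm g)
        = Real.log m / T + fmax hm g := by field_simp
    linarith
  · -- compressed ≤ teacher
    apply Finset.sup'_le
    intro i _
    set M := fmax hK (fun k => |d (l k) u - d (l k) t|)
    have habs : ∀ k, |d (l k) u - d (l k) t| ≤ M := fun k =>
      Finset.le_sup' (fun k => |d (l k) u - d (l k) t|) (Finset.mem_univ k)
    calc |(∑ k, A i k * d (l k) u) - (∑ k, A i k * d (l k) t)|
        = |∑ k, A i k * (d (l k) u - d (l k) t)| := by
          rw [← Finset.sum_sub_distrib]; congr 1; apply Finset.sum_congr rfl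
          intro k _; ring
      _ ≤ ∑ k, |A i k * (d (l k) u - d (l k) t)| := Finset.abs_sum_le_sum_abs _ _
      _ = ∑ k, A i k * |d (l k) u - d (l k) t| := by
          apply Finset.sum_congr rfl; intro k _
          rw [abs_mul, abs_of_nonneg (hA0 i k)]
      _ ≤ ∑ k, A i k * M := by
          apply Finset.sum_le_sum; intro k _
          exact mul_le_mul_of_nonneg_left (habs k) (hA0 i k)
      _ = M := by rw [← Finset.sum_mul, hA1 i, one_mul]
  · -- teacher ≤ distance
    apply Finset.sup'_le
    intro k _
    rw [abs_sub_le_iff]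
    constructor
    · have := htri (l k) t u
      have h2 := hsymm t u
      linarith
    · have := htri (l k) u t
      linarith
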